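/- Let A be an AUF algebra. Then A has a generating idempotent if and only if the set of primitive idempotents of A is partitioned into finitely many classes by the relation of equivalence of idempotents. -/

import Mathlib

open scoped BigOperators

universe u v

section BasicDefs

variable (R : Type u)

section MulOnly
variable [NonUnitalRing R]

/-- An idempotent element. -/
def IsIdem (e : R) : Prop := e * e = e

/-- Two idempotents are orthogonal. -/
def OrthIdem (e f : R) : Prop := e * f = 0 ∧ f * e = 0

/-- `f ≤ e` for idempotents: `f * e = f` and `e * f = f`. -/
def SubIdem (f e : R) : Prop := f * e = f ∧ e * f = f

/-- A primitive idempotent. -/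
def IsPrimIdem (e : R) : Prop :=
  IsIdem R e ∧ e ≠ 0 ∧ ∀ f : R, IsIdem R f → SubIdem R f e → f = 0 ∨ f = e

/-- Equivalence of idempotents: partial isometries `u ∈ eRf`, `v ∈ fRe` with
`u * v = e`, `v * u = f`. -/
def IdemEquiv (e f : R) : Prop :=
  ∃ u v : R, e * u * f = u ∧ f * v * e = v ∧ u * v = e ∧ v * u = f

/-- A generating idempotent: it has a finite orthogonal primitive decomposition
    such that every primitive idempotent is equivalent to a member of it. -/
def IsGenIdem (e : R) : Prop :=
  IsIdem R e ∧ ∃ (n : ℕ) (ε : Fin n → R),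
    (∀ k, IsPrimIdem R (ε k)) ∧ (∀ k l, k ≠ l → OrthIdem R (ε k) (ε l)) ∧
    e = ∑ k, ε k ∧ ∀ p : R, IsPrimIdem R p → ∃ k, IdemEquiv R p (ε k)

/-- An idempotent of the corner algebra `fRf`. -/
def IsIdemIn (f e : R) : Prop := IsIdem R e ∧ f * e * f = e

/-- A primitive idempotent of the corner algebra `fRf`. -/
def IsPrimIdemIn (f e : R) : Prop :=
  IsIdemIn R f e ∧ e ≠ 0 ∧ ∀ g : R, IsIdemIn R f g → SubIdem R g e → g = 0 ∨ g = e

/-- Equivalence of idempotents within the corner algebra `fRf`. -/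
def IdemEquivIn (f p q : R) : Prop :=
  ∃ u v : R, f * u * f = u ∧ f * v * f = v ∧ p * u * q = u ∧ q * v * p = v ∧
    u * v = p ∧ v * u = q

/-- A generating idempotent of the corner algebra `fRf`. -/
def IsGenIdemIn (f e : R) : Prop :=
  IsIdemIn R f e ∧ ∃ (n : ℕ) (ε : Fin n → R),
    (∀ k, IsPrimIdemIn R f (ε k)) ∧ (∀ k l, k ≠ l → OrthIdem R (ε k) (ε l)) ∧
    e = ∑ k, ε k ∧ ∀ p : R, IsPrimIdemIn R f p → ∃ k, IdemEquivIn R f p (ε k)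

end MulOnly

section Subspaces
variable [NonUnitalRing R] [Module ℂ R] [SMulCommClass ℂ R R] [IsScalarTower ℂ R R]

/-- The subspace `Re = {x | x * e = x}`. -/
def subAe (e : R) : Submodule ℂ R where
  carrier := {x | x * e = x}
  add_mem' := by
    intro a b ha hb
    simp only [Set.mem_setOf_eq] at *
    rw [add_mul, ha, hb]
  zero_mem' := by simp
  smul_mem' := by
    intro c x hx
    simp only [Set.mem_setOf_eq] at *
    rw [smul_mul_assoc, hx]

/-- The corner subspace `eRf = {x | e * x * f = x}`. -/
def subCorner (e f : R) : Submodule ℂ R where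
  carrier := {x | e * x * f = x}
  add_mem' := by
    intro a b ha hb
    simp only [Set.mem_setOf_eq] at *
    rw [mul_add, add_mul, ha, hb]
  zero_mem' := by simp
  smul_mem' := by
    intro c x hx
    simp only [Set.mem_setOf_eq] at *
    rw [mul_smul_comm, smul_mul_assoc, hx]

/-- A symmetric linear functional. -/
def IsSLF (ψ : R →ₗ[ℂ] ℂ) : Prop := ∀ x y : R, ψ (x * y) = ψ (y * x)

/-- Witness data for an AUF algebra: a family of pairwise orthogonal idempotents with
finite-dimensional corners spanning the algebra. -/
def IsAUFWitness {I : Type v} (E : I → R) : Prop :=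
  (∀ i, IsIdem R (E i)) ∧ (∀ i j, i ≠ j → OrthIdem R (E i) (E j)) ∧
  (∀ i j, FiniteDimensional ℂ (subCorner R (E i) (E j))) ∧
  (⨆ i, ⨆ j, subCorner R (E i) (E j)) = ⊤

/-- An almost unital and finite-dimensional (AUF) algebra. -/
def IsAUF : Prop := ∃ (I : Type u) (E : I → R), IsAUFWitness R E

end Subspaces

end BasicDefs

section AuxBasic
variable {A : Type u} [NonUnitalRing A]

theorem idemEquiv_refl {e : A} (he : IsIdem A e) : IdemEquiv A e e :=
  ⟨e, e, by rw [he, he], by rw [he, he], he, he⟩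

theorem idemEquiv_symm {e f : A} (h : IdemEquiv A e f) : IdemEquiv A f e := by
  obtain ⟨u, v, hu, hv, huv, hvu⟩ := h
  exact ⟨v, u, hv, hu, hvu, huv⟩

/-- Basic cancellation facts from an equivalence when `e` is idempotent. -/
theorem idemEquiv_facts {e f : A} (he : IsIdem A e) (h : IdemEquiv A e f) :
    ∃ u v : A, e * u * f = u ∧ f * v * e = v ∧ u * v = e ∧ v * u = f ∧
      e * u = u ∧ u * f = u ∧ f * v = v ∧ v * e = v ∧ IsIdem A f := by
  obtain ⟨u, v, hu, hv, huv, hvu⟩ := h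
  have hve : v * e = v := by
    calc v * e = f * v * e * e := by rw [hv]
    _ = f * v * (e * e) := by rw [mul_assoc]
    _ = f * v * e := by rw [he]
    _ = v := hv
  have heu : e * u = u := by
    calc e * u = e * (e * u * f) := by rw [hu]
    _ = (e * e) * u * f := by noncomm_ring
    _ = e * u * f := by rw [he]
    _ = u := hu
  have hf : IsIdem A f := by
    show f * f = f
    calc f * f = (v * u) * (v * u) := by rw [hvu]
    _ = v * (u * v) * u := by noncomm_ring
    _ = v * e * u := by rw [huv]
    _ = v * u := by rw [hve]
    _ = f := hvu
  have huf : u * f = u := by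
    calc u * f = e * u * f * f := by rw [hu]
    _ = e * u * (f * f) := by rw [mul_assoc]
    _ = e * u * f := by rw [hf]
    _ = u := hu
  have hfv : f * v = v := by
    calc f * v = f * (f * v * e) := by rw [hv]
    _ = (f * f) * v * e := by noncomm_ring
    _ = f * v * e := by rw [hf]
    _ = v := hv
  exact ⟨u, v, hu, hv, huv, hvu, heu, huf, hfv, hve, hf⟩

theorem IsIdem.of_equiv {e f : A} (he : IsIdem A e) (h : IdemEquiv A e f) : IsIdem A f := by
  obtain ⟨u, v, -, -, -, -, -, -, -, -, hf⟩ := idemEquiv_facts he h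
  exact hf

theorem idemEquiv_trans {e f g : A} (he : IsIdem A e) (h1 : IdemEquiv A e f)
    (h2 : IdemEquiv A f g) : IdemEquiv A e g := by
  obtain ⟨u, v, hu, hv, huv, hvu, heu, huf, hfv, hve, hf⟩ := idemEquiv_facts he h1
  obtain ⟨s, t, hs, ht, hst, hts, hfs, hsg, hgt, htf, hg⟩ := idemEquiv_facts hf h2
  refine ⟨u * s, t * v, ?_, ?_, ?_, ?_⟩
  · calc e * (u * s) * g = (e * u) * (s * g) := by noncomm_ring
    _ = u * s := by rw [heu, hsg]
  · calc g * (t * v) * e = (g * t) * (v * e) := by noncomm_ring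
    _ = t * v := by rw [hgt, hve]
  · calc u * s * (t * v) = u * (s * t) * v := by noncomm_ring
    _ = u * f * v := by rw [hst]
    _ = u * v := by rw [huf]
    _ = e := huv
  · calc t * v * (u * s) = t * (v * u) * s := by noncomm_ring
    _ = t * f * s := by rw [hvu]
    _ = t * (f * s) := by rw [mul_assoc]
    _ = t * s := by rw [hfs]
    _ = g := hts

theorem idemEquiv_ne_zero {e f : A} (he : IsIdem A e) (h : IdemEquiv A e f) (hne : e ≠ 0) :
    f ≠ 0 := by
  obtain ⟨u, v, hu, hv, huv, hvu, heu, huf, hfv, hve, hf⟩ := idemEquiv_facts he h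
  intro h0
  apply hne
  rw [← huv, ← huf, h0]
  noncomm_ring

theorem IsPrimIdem.of_equiv {e f : A} (he : IsPrimIdem A e) (h : IdemEquiv A e f) :
    IsPrimIdem A f := by
  obtain ⟨u, v, hu, hv, huv, hvu, heu, huf, hfv, hve, hf⟩ := idemEquiv_facts he.1 h
  refine ⟨hf, idemEquiv_ne_zero he.1 h he.2.1, ?_⟩
  intro k hk hkf
  -- transfer k to a subidempotent of e
  have hk1 : k * f = k := hkf.1
  have hk2 : f * k = k := hkf.2
  set k' := u * k * v with hk'
  have hk'idem : IsIdem A k' := by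
    show k' * k' = k'
    calc u * k * v * (u * k * v) = u * (k * (v * u) * k) * v := by noncomm_ring
    _ = u * (k * f * k) * v := by rw [hvu]
    _ = u * (k * k) * v := by rw [hk1]
    _ = u * k * v := by rw [hk]
    _ = k' := rfl
  have hk'sub : SubIdem A k' e := by
    constructor
    · calc u * k * v * e = u * k * (v * e) := by rw [mul_assoc]
      _ = u * k * v := by rw [hve]
    · calc e * (u * k * v) = (e * u) * k * v := by noncomm_ring
      _ = u * k * v := by rw [heu]
  have hback : v * k' * u = k := by
    calc v * (u * k * v) * u = (v * u) * k * (v * u) := by noncomm_ring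
    _ = f * k * f := by rw [hvu]
    _ = k * f := by rw [hk2]
    _ = k := hk1
  rcases he.2.2 k' hk'idem hk'sub with h0 | hE
  · left
    rw [← hback, h0]
    noncomm_ring
  · right
    rw [← hback, hE]
    calc v * e * u = v * u := by rw [hve]
    _ = f := hvu
end AuxBasic


section AuxPow
variable {A : Type u} [NonUnitalRing A]

/-- `pow1 y n = y^(n+1)`. -/
def pow1 (y : A) : ℕ → A
  | 0 => y
  | n+1 => y * pow1 y n

@[simp] lemma pow1_zero (y : A) : pow1 y 0 = y := rfl
@[simp] lemma pow1_succ (y : A) (n : ℕ) : pow1 y (n+1) = y * pow1 y n := rfl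

lemma pow1_add (y : A) (m n : ℕ) : pow1 y (m + n + 1) = pow1 y m * pow1 y n := by
  induction m with
  | zero => simp
  | succ m ih =>
      have h : m + 1 + n + 1 = (m + n + 1) + 1 := by omega
      rw [h, pow1_succ, ih, pow1_succ, mul_assoc]

variable {p y : A}

lemma corner_right (hp : IsIdem A p) (hy : p * y * p = y) : y * p = y := by
  have hpp : p * p = p := hp
  calc y * p = p * y * p * p := by rw [hy]
  _ = p * y * (p * p) := by rw [mul_assoc]
  _ = p * y * p := by rw [hpp]
  _ = y := hy

lemma corner_left (hp : IsIdem A p) (hy : p * y * p = y) : p * y = y := by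
  have hpp : p * p = p := hp
  calc p * y = p * (p * y * p) := by rw [hy]
  _ = (p * p) * y * p := by noncomm_ring
  _ = p * y * p := by rw [hpp]
  _ = y := hy

lemma pow1_left (hp : IsIdem A p) (hy : p * y * p = y) (k : ℕ) :
    p * pow1 y k = pow1 y k := by
  induction k with
  | zero => simpa using corner_left hp hy
  | succ k _ => rw [pow1_succ, ← mul_assoc, corner_left hp hy]

lemma pow1_right (hp : IsIdem A p) (hy : p * y * p = y) (k : ℕ) :
    pow1 y k * p = pow1 y k := by
  induction k with
  | zero => simpa using corner_right hp hy
  | succ k ih => rw [pow1_succ, mul_assoc, ih]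

lemma pow1_comm (y : A) (a b : ℕ) : pow1 y a * pow1 y b = pow1 y b * pow1 y a := by
  rw [← pow1_add, ← pow1_add]
  congr 1
  omega

end AuxPow

section AuxGood
variable {A : Type u} [NonUnitalRing A] [Module ℂ A] [SMulCommClass ℂ A A] [IsScalarTower ℂ A A]

lemma mem_subCorner {e f x : A} : x ∈ subCorner A e f ↔ e * x * f = x := Iff.rfl

/-- The span of `p` together with all powers of `y`: a commutative "unital polynomial
algebra" sitting inside the corner `pAp`. -/
def goodSub (p y : A) : Submodule ℂ A :=
  Submodule.span ℂ (insert p (Set.range (pow1 y)))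

variable {p y : A}

lemma p_mem_good : p ∈ goodSub p y :=
  Submodule.subset_span (Set.mem_insert _ _)

lemma pow1_mem_good (k : ℕ) : pow1 y k ∈ goodSub p y :=
  Submodule.subset_span (Set.mem_insert_of_mem _ ⟨k, rfl⟩)

lemma y_mem_good : y ∈ goodSub p y := pow1_mem_good 0

lemma good_corner (hp : IsIdem A p) (hy : p * y * p = y) {a : A} (ha : a ∈ goodSub p y) :
    p * a = a ∧ a * p = a := by
  induction ha using Submodule.span_induction with
  | mem x hx =>
      rcases hx with rfl | ⟨k, rfl⟩
      · exact ⟨hp, hp⟩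
      · exact ⟨pow1_left hp hy k, pow1_right hp hy k⟩
  | zero => simp
  | add x z _ _ hx hz => simp [mul_add, add_mul, hx.1, hx.2, hz.1, hz.2]
  | smul c x _ hx => simp [mul_smul_comm, smul_mul_assoc, hx.1, hx.2]

lemma good_gen_mul (hp : IsIdem A p) (hy : p * y * p = y)
    {a b : A} (ha : a ∈ insert p (Set.range (pow1 y)))
    (hb : b ∈ insert p (Set.range (pow1 y))) :
    a * b ∈ goodSub p y ∧ a * b = b * a := by
  have hpp : p * p = p := hp
  rcases ha with rfl | ⟨k, rfl⟩ <;> rcases hb with rfl | ⟨l, rfl⟩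
  · constructor
    · rw [hpp]; exact p_mem_good
    · rfl
  · constructor
    · rw [pow1_left hp hy l]; exact pow1_mem_good l
    · rw [pow1_left hp hy l, pow1_right hp hy l]
  · constructor
    · rw [pow1_right hp hy k]; exact pow1_mem_good k
    · rw [pow1_right hp hy k, pow1_left hp hy k]
  · constructor
    · rw [← pow1_add]; exact pow1_mem_good _
    · exact pow1_comm y k l

lemma good_mul (hp : IsIdem A p) (hy : p * y * p = y) {a b : A}
    (ha : a ∈ goodSub p y) (hb : b ∈ goodSub p y) : a * b ∈ goodSub p y := by
  induction hb using Submodule.span_induction with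
  | mem x hx =>
      -- a * generator; induct on a
      induction ha using Submodule.span_induction with
      | mem z hz => exact (good_gen_mul hp hy hz hx).1
      | zero => simpa using (goodSub p y).zero_mem
      | add z w _ _ hz hw => rw [add_mul]; exact (goodSub p y).add_mem hz hw
      | smul c z _ hz => rw [smul_mul_assoc]; exact (goodSub p y).smul_mem c hz
  | zero => simpa using (goodSub p y).zero_mem
  | add z w _ _ hz hw => rw [mul_add]; exact (goodSub p y).add_mem hz hw
  | smul c z _ hz => rw [mul_smul_comm]; exact (goodSub p y).smul_mem c hz

lemma good_comm (hp : IsIdem A p) (hy : p * y * p = y) {a b : A}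
    (ha : a ∈ goodSub p y) (hb : b ∈ goodSub p y) : a * b = b * a := by
  induction ha using Submodule.span_induction with
  | mem x hx =>
      induction hb using Submodule.span_induction with
      | mem z hz => exact (good_gen_mul hp hy hx hz).2
      | zero => simp
      | add z w _ _ hz hw => rw [mul_add, add_mul, hz, hw]
      | smul c z _ hz => rw [mul_smul_comm, smul_mul_assoc, hz]
  | zero => simp
  | add z w _ _ hz hw => rw [mul_add, add_mul, hz, hw]
  | smul c z _ hz => rw [mul_smul_comm, smul_mul_assoc, hz]

/-- Dichotomy in the finite-dimensional local corner of a primitive idempotent: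
`y ∈ pAp` is either nilpotent or invertible. -/
theorem nilp_or_inv (hp : IsPrimIdem A p) (hy : p * y * p = y)
    (hFD : FiniteDimensional ℂ (subCorner A p p)) :
    (∃ n, pow1 y n = 0) ∨ (∃ t, p * t * p = t ∧ t * y = p ∧ y * t = p) := by
  classical
  have hpI : IsIdem A p := hp.1
  have hyM : ∀ k, pow1 y k ∈ subCorner A p p := by
    intro k
    rw [mem_subCorner, mul_assoc, pow1_right hpI hy, pow1_left hpI hy]
  set d := Module.finrank ℂ (subCorner A p p) with hd
  set v : Fin (d+1) → subCorner A p p := fun k => ⟨pow1 y (k : ℕ), hyM _⟩ with hv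
  have hnli : ¬ LinearIndependent ℂ v := by
    intro h
    have := h.fintype_card_le_finrank
    simp only [Fintype.card_fin] at this
    omega
  obtain ⟨c, hc0, i0, hi0⟩ := Fintype.not_linearIndependent_iff.mp hnli
  have hrel : ∑ i : Fin (d+1), c i • pow1 y (i : ℕ) = 0 := by
    have := congrArg ((subCorner A p p).subtype) hc0
    simpa [map_sum, hv] using this
  set T : Finset (Fin (d+1)) := Finset.univ.filter (fun i => c i ≠ 0) with hT
  have hTne : T.Nonempty := ⟨i0, by simp [hT, hi0]⟩
  set m : Fin (d+1) := T.min' hTne with hm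
  have hmT : m ∈ T := T.min'_mem hTne
  have hcm : c m ≠ 0 := by
    have := hmT
    simp only [hT, Finset.mem_filter] at this
    exact this.2
  have hTrel : ∑ i ∈ T, c i • pow1 y (i : ℕ) = 0 := by
    rw [← hrel, hT]
    apply Finset.sum_filter_of_ne
    intro x _ hx
    intro hcx
    exact hx (by rw [hcx, zero_smul])
  set M : ℕ := (m : ℕ) with hM
  set x : A := pow1 y M with hx
  set a : Fin (d+1) → ℂ := fun i => -(c m)⁻¹ * c i with ha
  have hgt : ∀ i ∈ T.erase m, M + ((i : ℕ) - M - 1) + 1 = (i : ℕ) := by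
    intro i hi
    have h1 : m ≤ i := T.min'_le i (Finset.mem_of_mem_erase hi)
    have h2 : i ≠ m := Finset.ne_of_mem_erase hi
    have h3 : m < i := h1.lt_of_ne (fun hh => h2 hh.symm)
    have : (m : ℕ) < (i : ℕ) := Fin.lt_def.mp h3
    omega
  have hxm : x = ∑ i ∈ T.erase m, a i • pow1 y (i : ℕ) := by
    have hsplit : ∑ i ∈ T.erase m, c i • pow1 y (i : ℕ) + c m • x = 0 := by
      rw [hx, hM, Finset.sum_erase_add T _ hmT]
      exact hTrel
    have h1 : c m • x = -∑ i ∈ T.erase m, c i • pow1 y (i : ℕ) :=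
      eq_neg_of_add_eq_zero_right hsplit
    calc x = (c m)⁻¹ • (c m • x) := (inv_smul_smul₀ hcm x).symm
    _ = (c m)⁻¹ • (-∑ i ∈ T.erase m, c i • pow1 y (i : ℕ)) := by rw [h1]
    _ = ∑ i ∈ T.erase m, a i • pow1 y (i : ℕ) := by
        rw [smul_neg, Finset.smul_sum, ← Finset.sum_neg_distrib]
        apply Finset.sum_congr rfl
        intro i _
        rw [smul_smul, ha]
        simp only [neg_mul, neg_smul]
  -- the element `s` with `x * s = x`
  set s : A := ∑ i ∈ T.erase m, a i • pow1 y ((i : ℕ) - M - 1) with hs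
  have hs_good : s ∈ goodSub p y :=
    Submodule.sum_mem _ (fun i _ => Submodule.smul_mem _ _ (pow1_mem_good _))
  have hxs : x * s = x := by
    rw [hs, Finset.mul_sum]
    conv_rhs => rw [hxm]
    apply Finset.sum_congr rfl
    intro i hi
    rw [mul_smul_comm, hx, ← pow1_add, hgt i hi]
  -- `s = y * u₀` for a good `u₀`
  set u₀ : A := ∑ i ∈ T.erase m,
      a i • (if ((i : ℕ) - M - 1) = 0 then p else pow1 y ((i : ℕ) - M - 2)) with hu₀
  have hu₀_good : u₀ ∈ goodSub p y := by
    apply Submodule.sum_mem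
    intro i _
    apply Submodule.smul_mem
    split
    · exact p_mem_good
    · exact pow1_mem_good _
  have hsu : s = y * u₀ := by
    rw [hu₀, Finset.mul_sum, hs]
    apply Finset.sum_congr rfl
    intro i _
    rw [mul_smul_comm]
    congr 1
    by_cases h : (i : ℕ) - M - 1 = 0
    · rw [if_pos h, h, pow1_zero]
      exact (corner_right hp.1 hy).symm
    · rw [if_neg h]
      have h2 : (i : ℕ) - M - 1 = ((i : ℕ) - M - 2) + 1 := by omega
      rw [h2, pow1_succ]
  -- powers of s
  have hxspow : ∀ j, x * pow1 s j = x := by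
    intro j
    induction j with
    | zero => simpa using hxs
    | succ j ih =>
        calc x * pow1 s (j+1) = x * (s * pow1 s j) := by rw [pow1_succ]
        _ = (x * s) * pow1 s j := by rw [mul_assoc]
        _ = x * pow1 s j := by rw [hxs]
        _ = x := ih
  have hspow_form : ∀ j, ∃ u ∈ goodSub p y, pow1 s j = pow1 y j * u := by
    intro j
    induction j with
    | zero => exact ⟨u₀, hu₀_good, by simpa using hsu⟩
    | succ j ih =>
        obtain ⟨u, hu_good, hu_eq⟩ := ih
        refine ⟨u₀ * u, good_mul hp.1 hy hu₀_good hu_good, ?_⟩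
        calc pow1 s (j+1) = s * pow1 s j := rfl
        _ = (y * u₀) * (pow1 y j * u) := by rw [← hsu, hu_eq]
        _ = y * (u₀ * pow1 y j) * u := by noncomm_ring
        _ = y * (pow1 y j * u₀) * u := by
            rw [good_comm hp.1 hy hu₀_good (pow1_mem_good j)]
        _ = (y * pow1 y j) * (u₀ * u) := by noncomm_ring
        _ = pow1 y (j+1) * (u₀ * u) := by rw [pow1_succ]
  -- the candidate idempotent h = s^(M+1)
  obtain ⟨u, hu_good, hu_eq⟩ := hspow_form M
  set h : A := pow1 s M with hh
  have hh_eq : h = x * u := by rw [hu_eq, hx]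
  have hh_good : h ∈ goodSub p y := by
    rw [hh_eq, hx]
    exact good_mul hp.1 hy (pow1_mem_good M) hu_good
  have hxh : x * h = x := hxspow M
  have hh_idem : IsIdem A h := by
    show h * h = h
    calc h * h = (x * u) * h := by rw [hh_eq]
    _ = x * (u * h) := by rw [mul_assoc]
    _ = x * (h * u) := by rw [good_comm hp.1 hy hu_good hh_good]
    _ = (x * h) * u := by rw [mul_assoc]
    _ = x * u := by rw [hxh]
    _ = h := hh_eq.symm
  have hh_corner := good_corner hp.1 hy hh_good
  have hh_sub : SubIdem A h p := ⟨hh_corner.2, hh_corner.1⟩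
  rcases hp.2.2 h hh_idem hh_sub with h0 | hP
  · -- nilpotent case
    left
    refine ⟨M, ?_⟩
    have : x = 0 := by rw [← hxh, h0, mul_zero]
    rw [← hx, this]
  · -- invertible case
    right
    have key : ∀ t ∈ goodSub p y, y * t = p →
        ∃ t', p * t' * p = t' ∧ t' * y = p ∧ y * t' = p := by
      intro t ht_good hyt
      have hty : t * y = p := by
        rw [← hyt, good_comm hp.1 hy ht_good y_mem_good]
      have htc := good_corner hp.1 hy ht_good
      exact ⟨t, by rw [htc.1, htc.2], hty, hyt⟩
    by_cases hM0 : M = 0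
    · exact key u hu_good (by rw [← hP, hh_eq, hx, hM0, pow1_zero])
    · refine key (pow1 y (M-1) * u) (good_mul hp.1 hy (pow1_mem_good _) hu_good) ?_
      calc y * (pow1 y (M-1) * u) = (y * pow1 y (M-1)) * u := by rw [mul_assoc]
      _ = pow1 y ((M-1)+1) * u := by rw [pow1_succ]
      _ = pow1 y M * u := by congr 2; omega
      _ = p := by rw [← hx, ← hh_eq, hP]
end AuxGood
section AuxOrth
variable {A : Type u} [NonUnitalRing A]

/-- If `t` inverts `fef` in the corner `fAf`, then `f` is equivalent to a subidempotent
of `e`. -/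
theorem equiv_sub_of_inv {f e t : A} (hf : IsIdem A f) (he : IsIdem A e)
    (ht : f * t * f = t) (hty : t * (f * e * f) = f) :
    ∃ q : A, IsIdem A q ∧ SubIdem A q e ∧ IdemEquiv A f q := by
  have hff : f * f = f := hf
  have hee : e * e = e := he
  have htf : t * f = t := by
    calc t * f = f * t * f * f := by rw [ht]
    _ = f * t * (f * f) := by rw [mul_assoc]
    _ = f * t * f := by rw [hff]
    _ = t := ht
  have hft : f * t = t := by
    calc f * t = f * (f * t * f) := by rw [ht]
    _ = (f * f) * t * f := by noncomm_ring
    _ = f * t * f := by rw [hff]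
    _ = t := ht
  set u : A := t * e with hu
  set v : A := e * f with hv
  have huv : u * v = f := by
    calc u * v = t * (e * e) * f := by rw [hu, hv]; noncomm_ring
    _ = t * e * f := by rw [hee]
    _ = (t * f) * e * f := by rw [htf]
    _ = t * (f * e * f) := by noncomm_ring
    _ = f := hty
  have hfu : f * u = u := by rw [hu, ← mul_assoc, hft]
  have hvf : v * f = v := by rw [hv, mul_assoc, hff]
  set q : A := v * u with hq
  have hqq : q * q = q := by
    calc q * q = v * (u * v) * u := by rw [hq]; noncomm_ring
    _ = v * f * u := by rw [huv]
    _ = v * u := by rw [hvf]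
    _ = q := hq
  have hqe : q * e = q := by
    calc q * e = e * f * (t * e) * e := by rw [hq, hv, hu]
    _ = e * f * t * (e * e) := by noncomm_ring
    _ = e * f * t * e := by rw [hee]
    _ = e * f * (t * e) := by rw [mul_assoc]
    _ = q := by rw [hq, hv, hu]
  have heq : e * q = q := by
    calc e * q = (e * e) * f * u := by rw [hq, hv]; noncomm_ring
    _ = e * f * u := by rw [hee]
    _ = q := by rw [hq, hv]
  have h1 : f * u * q = u := by
    rw [hfu, hq, ← mul_assoc, huv, hfu]
  have h2 : q * v * f = v := by
    rw [mul_assoc, hvf, hq, mul_assoc, huv, hvf]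
  exact ⟨q, hqq, ⟨hqe, heq⟩, ⟨u, v, h1, h2, huv, hq.symm⟩⟩

/-- If `fef` is nilpotent, then `f` is equivalent to an idempotent orthogonal to `e`,
in a way that preserves orthogonality to other elements. -/
theorem orth_of_nilp {f e : A} (hf : IsIdem A f) (he : IsIdem A e) {n : ℕ}
    (hnil : pow1 (f * e * f) n = 0) :
    ∃ g : A, IsIdem A g ∧ IdemEquiv A f g ∧ OrthIdem A g e ∧
      ∀ z : A, z * f = 0 → f * z = 0 → z * e = 0 → e * z = 0 → z * g = 0 ∧ g * z = 0 := by
  have hff : f * f = f := hf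
  have hee : e * e = e := he
  set y : A := f * e * f with hy
  have hyc : f * y * f = y := by
    calc f * y * f = (f * f) * e * (f * f) := by rw [hy]; noncomm_ring
    _ = f * e * f := by rw [hff]
    _ = y := hy.symm
  set w : A := f + ∑ k ∈ Finset.range n, pow1 y k with hw
  have hfw : f * w = w := by
    rw [hw, mul_add, hff, Finset.mul_sum]
    congr 1
    exact Finset.sum_congr rfl fun k _ => pow1_left hf hyc k
  have hwf : w * f = w := by
    rw [hw, add_mul, hff, Finset.sum_mul]
    congr 1
    exact Finset.sum_congr rfl fun k _ => pow1_right hf hyc k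
  have hwy : w * y = ∑ k ∈ Finset.range (n+1), pow1 y k := by
    rw [hw, add_mul, Finset.sum_mul]
    have h1 : f * y = y := corner_left hf hyc
    have h2 : ∀ k, pow1 y k * y = pow1 y (k+1) := by
      intro k
      have : pow1 y k * pow1 y 0 = pow1 y (k + 0 + 1) := (pow1_add y k 0).symm
      simpa using this
    rw [h1, Finset.sum_congr rfl fun k _ => h2 k, Finset.sum_range_succ' (pow1 y) n]
    simp [add_comm]
  have hyw : y * w = ∑ k ∈ Finset.range (n+1), pow1 y k := by
    rw [hw, mul_add, Finset.mul_sum]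
    have h1 : y * f = y := corner_right hf hyc
    have h2 : ∀ k, y * pow1 y k = pow1 y (k+1) := fun k => (pow1_succ y k).symm
    rw [h1, Finset.sum_congr rfl fun k _ => h2 k, Finset.sum_range_succ' (pow1 y) n]
    simp [add_comm]
  have hw1 : w - w * y = f := by
    rw [hwy, hw, Finset.sum_range_succ, hnil, add_zero]
    abel
  have hw2 : w - y * w = f := by
    rw [hyw, hw, Finset.sum_range_succ, hnil, add_zero]
    abel
  set q : A := w - e * w with hq
  have hfq : f * q = f := by
    have hfew : f * (e * w) = y * w := by
      calc f * (e * w) = f * (e * (f * w)) := by rw [hfw]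
      _ = (f * e * f) * w := by noncomm_ring
      _ = y * w := by rw [hy]
    rw [hq, mul_sub, hfw, hfew, hw2]
  have hqf : q * f = q := by
    rw [hq, sub_mul, hwf, mul_assoc, hwf]
  have hqq : q * q = q := by
    calc q * q = (q * f) * q := by rw [hqf]
    _ = q * (f * q) := by rw [mul_assoc]
    _ = q * f := by rw [hfq]
    _ = q := hqf
  have heq : e * q = 0 := by
    rw [hq, mul_sub, ← mul_assoc, hee, sub_self]
  have hequiv1 : IdemEquiv A f q := by
    refine ⟨f, q, ?_, ?_, hfq, hqf⟩
    · rw [hff, hfq]  -- f * f * q = u = f : goal f*f*q = f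
    · rw [hqq, hqf]  -- q * q * f = q
  set g : A := q - q * e with hg
  have hge : g * e = 0 := by
    rw [hg, sub_mul, mul_assoc, hee, sub_self]
  have heg : e * g = 0 := by
    rw [hg, mul_sub, ← mul_assoc, heq, zero_mul, sub_self]
  have hqg : q * g = g := by
    calc q * g = q * q - q * (q * e) := by rw [hg, mul_sub]
    _ = q - q * e := by rw [hqq, ← mul_assoc, hqq]
    _ = g := hg.symm
  have hgq : g * q = q := by
    calc g * q = q * q - (q * e) * q := by rw [hg, sub_mul]
    _ = q - q * (e * q) := by rw [hqq, mul_assoc]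
    _ = q - q * 0 := by rw [heq]
    _ = q := by rw [mul_zero, sub_zero]
  have hgg : g * g = g := by
    have h1 : (q * e) * q = 0 := by rw [mul_assoc, heq, mul_zero]
    have h2 : (q * e) * (q * e) = 0 := by rw [← mul_assoc, h1, zero_mul]
    have h3 : q * (q * e) = q * e := by rw [← mul_assoc, hqq]
    calc g * g = (q - q * e) * (q - q * e) := by rw [← hg]
    _ = q * q - q * (q * e) - ((q * e) * q - (q * e) * (q * e)) := by noncomm_ring
    _ = q - q * e - (0 - 0) := by rw [hqq, h3, h1, h2]
    _ = g := by rw [hg]; abel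
  have hequiv2 : IdemEquiv A q g := by
    refine ⟨g, q, ?_, ?_, hgq, hqg⟩
    · rw [hqg, hgg]
    · rw [hgq, hqq]
  refine ⟨g, hgg, idemEquiv_trans hf hequiv1 hequiv2, ⟨hge, heg⟩, ?_⟩
  intro z hzf hfz hze hez
  have hzy : z * y = 0 := by
    rw [hy, ← mul_assoc, ← mul_assoc, hzf, zero_mul, zero_mul]
  have hyz : y * z = 0 := by
    rw [hy, mul_assoc, hfz, mul_zero]
  have hzpow : ∀ k, z * pow1 y k = 0 ∧ pow1 y k * z = 0 := by
    intro k
    induction k with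
    | zero => exact ⟨hzy, hyz⟩
    | succ k ih =>
        constructor
        · rw [pow1_succ, ← mul_assoc, hzy, zero_mul]
        · rw [pow1_succ, mul_assoc, ih.2, mul_zero]
  have hzw : z * w = 0 := by
    rw [hw, mul_add, hzf, Finset.mul_sum, zero_add]
    exact Finset.sum_eq_zero fun k _ => (hzpow k).1
  have hwz : w * z = 0 := by
    rw [hw, add_mul, hfz, Finset.sum_mul, zero_add]
    exact Finset.sum_eq_zero fun k _ => (hzpow k).2
  have hzq : z * q = 0 := by
    rw [hq, mul_sub, hzw, ← mul_assoc, hze, zero_mul, sub_self]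
  have hqz : q * z = 0 := by
    rw [hq, sub_mul, hwz, mul_assoc, hwz, mul_zero, sub_self]
  constructor
  · rw [hg, mul_sub, hzq, ← mul_assoc, hzq, zero_mul, sub_self]
  · rw [hg, sub_mul, hqz, mul_assoc, hez, mul_zero, sub_self]
end AuxOrth

section AuxStep
variable {A : Type u} [NonUnitalRing A] [Module ℂ A] [SMulCommClass ℂ A A] [IsScalarTower ℂ A A]

/-- The key step: a primitive idempotent not equivalent to a primitive idempotent `e`
can be replaced by an equivalent one orthogonal to `e`, preserving orthogonality. -/
theorem orth_step {p e : A} (hFD : FiniteDimensional ℂ (subCorner A p p))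
    (hp : IsPrimIdem A p) (he : IsPrimIdem A e) (hne : ¬ IdemEquiv A p e) :
    ∃ p' : A, IsPrimIdem A p' ∧ IdemEquiv A p p' ∧ OrthIdem A p' e ∧
      ∀ z : A, z * p = 0 → p * z = 0 → z * e = 0 → e * z = 0 → z * p' = 0 ∧ p' * z = 0 := by
  have hpp : p * p = p := hp.1
  set y : A := p * e * p with hy
  have hyc : p * y * p = y := by
    calc p * y * p = (p * p) * e * (p * p) := by rw [hy]; noncomm_ring
    _ = p * e * p := by rw [hpp]
    _ = y := hy.symm
  rcases nilp_or_inv hp hyc hFD with ⟨n, hn⟩ | ⟨t, htc, hty, hyt⟩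
  · obtain ⟨g, hgI, hgE, hgO, hgZ⟩ := orth_of_nilp hp.1 he.1 hn
    exact ⟨g, hp.of_equiv hgE, hgE, hgO, hgZ⟩
  · exfalso
    obtain ⟨q, hqI, hqS, hqE⟩ := equiv_sub_of_inv hp.1 he.1 htc (by rw [← hy]; exact hty)
    have hq0 : q ≠ 0 := idemEquiv_ne_zero hp.1 hqE hp.2.1
    rcases he.2.2 q hqI hqS with h0 | hE
    · exact hq0 h0
    · exact hne (hE ▸ hqE)
end AuxStep
section AuxSum
variable {A : Type u} [NonUnitalRing A]

theorem sum_absorb {ι : Type v} (E : ι → A) (F : Finset ι)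
    (hidem : ∀ i ∈ F, IsIdem A (E i))
    (horth : ∀ i ∈ F, ∀ j ∈ F, i ≠ j → E i * E j = 0) :
    (∀ i ∈ F, (∑ j ∈ F, E j) * E i = E i ∧ E i * (∑ j ∈ F, E j) = E i) ∧
      IsIdem A (∑ i ∈ F, E i) := by
  classical
  have habs : ∀ i ∈ F, (∑ j ∈ F, E j) * E i = E i ∧ E i * (∑ j ∈ F, E j) = E i := by
    intro i hi
    constructor
    · rw [Finset.sum_mul]
      rw [Finset.sum_eq_single_of_mem i hi]
      · exact hidem i hi
      · intro j hj hji
        exact horth j hj i hi hji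
    · rw [Finset.mul_sum]
      rw [Finset.sum_eq_single_of_mem i hi]
      · exact hidem i hi
      · intro j hj hji
        exact horth i hi j hj (Ne.symm hji)
  refine ⟨habs, ?_⟩
  show (∑ i ∈ F, E i) * (∑ i ∈ F, E i) = ∑ i ∈ F, E i
  rw [Finset.sum_mul]
  exact Finset.sum_congr rfl fun i hi => (habs i hi).2
end AuxSum

section AuxFD
variable {A : Type u} [NonUnitalRing A] [Module ℂ A] [SMulCommClass ℂ A A] [IsScalarTower ℂ A A]

/-- In an AUF algebra, every corner of an idempotent is finite-dimensional. -/
theorem corner_fd (hA : IsAUF A) {p : A} (hp : IsIdem A p) :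
    FiniteDimensional ℂ (subCorner A p p) := by
  classical
  obtain ⟨I, E, hidem, horth, hfd, hsup⟩ := hA
  -- find a finite set F with g := ∑_{i ∈ F} E i dominating p
  have hmem : p ∈ ⨆ x : I × I, subCorner A (E x.1) (E x.2) := by
    rw [iSup_prod, hsup]
    trivial
  obtain ⟨S, hS⟩ := Submodule.mem_iSup_iff_exists_finset.mp hmem
  set F : Finset I := S.image Prod.fst ∪ S.image Prod.snd with hF
  set g : A := ∑ i ∈ F, E i with hg
  obtain ⟨habs, hgI⟩ := sum_absorb E F (fun i _ => hidem i)
    (fun i _ j _ hij => (horth i j hij).1)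
  have hgg : g * g = g := hgI
  have hclaim : (⨆ x ∈ S, subCorner A (E x.1) (E x.2)) ≤ subCorner A g g := by
    refine iSup₂_le ?_
    intro x hx
    intro z hz
    have hz' : E x.1 * z * E x.2 = z := hz
    have h1 : x.1 ∈ F := by
      rw [hF]
      exact Finset.mem_union_left _ (Finset.mem_image.mpr ⟨x, hx, rfl⟩)
    have h2 : x.2 ∈ F := by
      rw [hF]
      exact Finset.mem_union_right _ (Finset.mem_image.mpr ⟨x, hx, rfl⟩)
    show g * z * g = z
    calc g * z * g = g * (E x.1 * z * E x.2) * g := by rw [hz']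
    _ = (g * E x.1) * z * (E x.2 * g) := by noncomm_ring
    _ = E x.1 * z * E x.2 := by rw [(habs x.1 h1).1, (habs x.2 h2).2]
    _ = z := hz'
  have hpg : g * p * g = p := hclaim hS
  -- p-corner sits inside the g-corner
  have hsub1 : subCorner A p p ≤ subCorner A g g := by
    intro z hz
    have hz' : p * z * p = z := hz
    show g * z * g = z
    have h1 : z = (g * p * g) * z * (g * p * g) := by rw [hpg, hz']
    calc g * z * g = g * ((g * p * g) * z * (g * p * g)) * g := by rw [← h1]
    _ = ((g * g) * p * g) * z * (g * p * (g * g)) := by noncomm_ring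
    _ = (g * p * g) * z * (g * p * g) := by rw [hgg]
    _ = z := h1.symm
  -- the g-corner sits inside a finite sup of finite-dimensional corners
  set N : Submodule ℂ A := F.sup (fun i => F.sup (fun j => subCorner A (E i) (E j))) with hN
  have hsub2 : subCorner A g g ≤ N := by
    intro z hz
    have hz' : g * z * g = z := hz
    have hdecomp : z = ∑ i ∈ F, ∑ j ∈ F, E i * (z * E j) := by
      calc z = g * z * g := hz'.symm
      _ = g * (z * g) := by rw [mul_assoc]
      _ = ∑ i ∈ F, E i * (z * g) := by rw [hg, Finset.sum_mul]
      _ = ∑ i ∈ F, E i * (∑ j ∈ F, z * E j) := by rw [hg, Finset.mul_sum]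
      _ = ∑ i ∈ F, ∑ j ∈ F, E i * (z * E j) := by
          exact Finset.sum_congr rfl fun i _ => Finset.mul_sum _ _ _
    rw [hdecomp]
    apply Submodule.sum_mem
    intro i hi
    apply Submodule.sum_mem
    intro j hj
    have hmem2 : E i * (z * E j) ∈ subCorner A (E i) (E j) := by
      show E i * (E i * (z * E j)) * E j = E i * (z * E j)
      have hii : E i * E i = E i := hidem i
      have hjj : E j * E j = E j := hidem j
      calc E i * (E i * (z * E j)) * E j = (E i * E i) * z * (E j * E j) := by noncomm_ring
      _ = E i * z * E j := by rw [hii, hjj]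
      _ = E i * (z * E j) := by rw [mul_assoc]
    have hle : subCorner A (E i) (E j) ≤ N := by
      rw [hN]
      exact le_trans (Finset.le_sup (f := fun j => subCorner A (E i) (E j)) hj)
        (Finset.le_sup (f := fun i => F.sup (fun j => subCorner A (E i) (E j))) hi)
    exact hle hmem2
  haveI : ∀ i : I, FiniteDimensional ℂ ↥(F.sup (fun j => subCorner A (E i) (E j))) := by
    intro i
    haveI := fun j : I => hfd i j
    exact Submodule.finiteDimensional_finset_sup F _
  haveI : FiniteDimensional ℂ N := by
    rw [hN]
    exact Submodule.finiteDimensional_finset_sup F _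
  exact Submodule.finiteDimensional_of_le (le_trans hsub1 hsub2)
end AuxFD
section AuxMain
variable {A : Type u} [NonUnitalRing A] [Module ℂ A] [SMulCommClass ℂ A A] [IsScalarTower ℂ A A]

/-- Extract pairwise-inequivalent representatives from a finite covering set. -/
theorem exists_reps : ∀ S : Finset A, (∀ p ∈ S, IsPrimIdem A p) →
    (∀ p : A, IsPrimIdem A p → ∃ q ∈ S, IdemEquiv A p q) →
    ∃ T : Finset A, (∀ p ∈ T, IsPrimIdem A p) ∧
      (∀ p : A, IsPrimIdem A p → ∃ q ∈ T, IdemEquiv A p q) ∧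
      (∀ a ∈ T, ∀ b ∈ T, a ≠ b → ¬ IdemEquiv A a b) := by
  classical
  intro S
  induction S using Finset.strongInduction with
  | _ S ih =>
    intro hprim hcov
    by_cases hex : ∃ a ∈ S, ∃ b ∈ S, a ≠ b ∧ IdemEquiv A a b
    · obtain ⟨a, ha, b, hb, hab, hE⟩ := hex
      refine ih (S.erase b) (Finset.erase_ssubset hb) ?_ ?_
      · intro p hp
        exact hprim p (Finset.mem_of_mem_erase hp)
      · intro p hpP
        obtain ⟨q, hq, hpq⟩ := hcov p hpP
        by_cases hqb : q = b
        · refine ⟨a, Finset.mem_erase.mpr ⟨hab, ha⟩, ?_⟩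
          subst hqb
          exact idemEquiv_trans hpP.1 hpq (idemEquiv_symm hE)
        · exact ⟨q, Finset.mem_erase.mpr ⟨hqb, hq⟩, hpq⟩
    · push_neg at hex
      exact ⟨S, hprim, hcov, fun a ha b hb hab => hex a ha b hb hab⟩

/-- Orthogonalize a primitive idempotent against a finite orthogonal family of primitive
idempotents, none of which is equivalent to it. -/
theorem orth_list (hA : IsAUF A) :
    ∀ (L : List A) (p : A), IsPrimIdem A p →
    (∀ q ∈ L, IsPrimIdem A q ∧ ¬ IdemEquiv A p q) →
    L.Pairwise (OrthIdem A) →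
    ∃ p' : A, IsPrimIdem A p' ∧ IdemEquiv A p p' ∧ ∀ q ∈ L, OrthIdem A p' q := by
  intro L
  induction L with
  | nil =>
      intro p hp _ _
      exact ⟨p, hp, idemEquiv_refl hp.1, by simp⟩
  | cons e L ih =>
      intro p hp hq hpw
      obtain ⟨p₁, hp₁P, hp₁E, hp₁O⟩ :=
        ih p hp (fun q hq' => hq q (List.mem_cons_of_mem _ hq')) hpw.of_cons
      have heP : IsPrimIdem A e := (hq e List.mem_cons_self).1
      have hne : ¬ IdemEquiv A p₁ e := by
        intro hcon
        exact (hq e List.mem_cons_self).2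
          (idemEquiv_trans hp.1 hp₁E hcon)
      obtain ⟨p', hp'P, hp'E, hp'O, hp'Z⟩ :=
        orth_step (corner_fd hA hp₁P.1) hp₁P heP hne
      refine ⟨p', hp'P, idemEquiv_trans hp.1 hp₁E hp'E, ?_⟩
      intro q hq'
      rcases List.mem_cons.mp hq' with rfl | hq''
      · exact hp'O
      · have h1 := hp₁O q hq''
        have h2 : OrthIdem A e q := (List.pairwise_cons.mp hpw).1 q hq''
        have h3 := hp'Z q h1.2 h1.1 h2.2 h2.1
        exact ⟨h3.2, h3.1⟩

/-- Replace a pairwise-inequivalent list of primitive idempotents by an equivalent,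
pairwise-orthogonal one. -/
theorem build_list (hA : IsAUF A) :
    ∀ L : List A, (∀ p ∈ L, IsPrimIdem A p) →
      L.Pairwise (fun a b => ¬ IdemEquiv A a b) →
      ∃ L' : List A, (∀ q ∈ L', IsPrimIdem A q) ∧ L'.Pairwise (OrthIdem A) ∧
        List.Forall₂ (IdemEquiv A) L L' := by
  intro L
  induction L with
  | nil => exact fun _ _ => ⟨[], by simp, by simp, List.Forall₂.nil⟩
  | cons a L ih =>
      intro hprim hpw
      obtain ⟨L', hL'p, hL'o, hL'e⟩ :=
        ih (fun p hp => hprim p (List.mem_cons_of_mem _ hp)) hpw.of_cons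
      have haP : IsPrimIdem A a := hprim a List.mem_cons_self
      have hcond : ∀ q ∈ L', IsPrimIdem A q ∧ ¬ IdemEquiv A a q := by
        intro q hqL'
        refine ⟨hL'p q hqL', ?_⟩
        intro haq
        obtain ⟨n, hn⟩ := List.mem_iff_get.mp hqL'
        obtain ⟨hlen, hfa⟩ := List.forall₂_iff_get.mp hL'e
        have hb := hfa n.val (by rw [hlen]; exact n.isLt) n.isLt
        have hbL : L.get ⟨n.val, by rw [hlen]; exact n.isLt⟩ ∈ L := List.get_mem _ _
        have hna : ¬ IdemEquiv A a (L.get ⟨n.val, by rw [hlen]; exact n.isLt⟩) :=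
          (List.pairwise_cons.mp hpw).1 _ hbL
        apply hna
        have hbq : IdemEquiv A (L.get ⟨n.val, by rw [hlen]; exact n.isLt⟩) q := by
          rw [← hn]
          exact hb
        have hLidem : IsIdem A (L.get ⟨n.val, by rw [hlen]; exact n.isLt⟩) :=
          (hprim _ (List.mem_cons_of_mem _ hbL)).1
        exact idemEquiv_trans haP.1 haq (idemEquiv_symm hbq)
      obtain ⟨a', ha'P, ha'E, ha'O⟩ := orth_list hA L' a haP hcond hL'o
      refine ⟨a' :: L', ?_, ?_, List.Forall₂.cons ha'E hL'e⟩
      · intro q hq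
        rcases List.mem_cons.mp hq with rfl | h
        · exact ha'P
        · exact hL'p q h
      · exact List.pairwise_cons.mpr ⟨fun q hq => ha'O q hq, hL'o⟩
end AuxMain

/-- An AUF algebra has a generating idempotent iff its primitive idempotents
fall into finitely many equivalence classes. -/
theorem stmt_11 {A : Type u} [NonUnitalRing A] [Module ℂ A] [SMulCommClass ℂ A A]
    [IsScalarTower ℂ A A] (hA : IsAUF A) :
    (∃ e : A, IsGenIdem A e) ↔
    (∃ S : Finset A, (∀ p ∈ S, IsPrimIdem A p) ∧
      ∀ p : A, IsPrimIdem A p → ∃ q ∈ S, IdemEquiv A p q) := by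
  classical
  constructor
  · rintro ⟨e, _, n, ε, hprim, _, _, hcov⟩
    refine ⟨Finset.univ.image ε, ?_, ?_⟩
    · intro p hp'
      obtain ⟨k, -, rfl⟩ := Finset.mem_image.mp hp'
      exact hprim k
    · intro p hpP
      obtain ⟨k, hk⟩ := hcov p hpP
      exact ⟨ε k, Finset.mem_image.mpr ⟨k, Finset.mem_univ k, rfl⟩, hk⟩
  · rintro ⟨S, hSp, hScov⟩
    obtain ⟨T, hTp, hTcov, hTne⟩ := exists_reps S hSp hScov
    set L : List A := T.toList with hL
    have hLp : ∀ p ∈ L, IsPrimIdem A p := fun p hp => hTp p (Finset.mem_toList.mp hp)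
    have hLpw : L.Pairwise (fun a b => ¬ IdemEquiv A a b) :=
      List.Pairwise.imp_of_mem
        (fun {a b} ha hb hne =>
          hTne a (Finset.mem_toList.mp ha) b (Finset.mem_toList.mp hb) hne)
        T.nodup_toList
    obtain ⟨L', hL'p, hL'o, hL'e⟩ := build_list hA L hLp hLpw
    have hoI : ∀ k l : Fin L'.length, k ≠ l → OrthIdem A (L'.get k) (L'.get l) := by
      intro k l hkl
      rcases lt_or_gt_of_ne hkl with h | h
      · exact List.pairwise_iff_get.mp hL'o k l h
      · have h2 := List.pairwise_iff_get.mp hL'o l k h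
        exact ⟨h2.2, h2.1⟩
    obtain ⟨habs, heI⟩ := sum_absorb L'.get Finset.univ
      (fun k _ => (hL'p _ (L'.get_mem _)).1)
      (fun k _ l _ hkl => (hoI k l hkl).1)
    refine ⟨∑ k, L'.get k, heI, L'.length, L'.get, ?_, hoI, rfl, ?_⟩
    · intro k
      exact hL'p _ (L'.get_mem _)
    · intro p hpP
      obtain ⟨q, hqT, hpq⟩ := hTcov p hpP
      have hqL : q ∈ L := by
        rw [hL]
        exact Finset.mem_toList.mpr hqT
      obtain ⟨k, hk⟩ := List.mem_iff_get.mp hqL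
      obtain ⟨hlen, hfa⟩ := List.forall₂_iff_get.mp hL'e
      have hklt : k.val < L'.length := by rw [← hlen]; exact k.isLt
      refine ⟨⟨k.val, hklt⟩, ?_⟩
      have h2 : IdemEquiv A (L.get ⟨k.val, k.isLt⟩) (L'.get ⟨k.val, hklt⟩) :=
        hfa k.val k.isLt hklt
      have h3 : IdemEquiv A q (L'.get ⟨k.val, hklt⟩) := by
        rw [← hk]
        exact h2
      exact idemEquiv_trans hpP.1 hpq h3
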